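/- Let ω ∈ ℝᴺ be such that (1, ω¹, ..., ωᴺ) are linearly independent over ℚ (equivalently, z·ω ∈ ℤ with z ∈ ℤᴺ implies z = 0). Then for every x, y ∈ 𝕋ᴺ and every δ > 0 there exists k ∈ ℕ with d(x + kω, y) < δ, where d is the metric on the torus 𝕋ᴺ = ℝᴺ/ℤᴺ. -/

import Mathlib

noncomputable section
open scoped Real ComplexConjugate
open MeasureTheory Set Submodule ContinuousMap Complex Filter Topology

namespace IrrKron

local instance : Fact ((0:ℝ) < 1) := ⟨one_pos⟩

abbrev G (N : ℕ) := Fin N → AddCircle (1:ℝ)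

variable {N : ℕ}

/-- Characters of the torus. -/
def chr (z : Fin N → ℤ) : C(G N, ℂ) :=
  ⟨fun x => ∏ n, fourier (z n) (x n), by
    apply continuous_finset_prod; intro n _
    exact (fourier (z n)).continuous.comp (continuous_apply n)⟩

lemma chr_apply (z : Fin N → ℤ) (x : G N) : chr z x = ∏ n, fourier (z n) (x n) := rfl

lemma chr_zero : chr (0 : Fin N → ℤ) = 1 := by
  ext x
  simp [chr_apply, fourier_zero]

lemma fourier_pt_add {m : ℤ} (a b : AddCircle (1:ℝ)) :
    fourier m (a + b) = fourier m a * fourier m b := by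
  simp only [fourier_apply, smul_add, AddCircle.toCircle_add, Circle.coe_mul]

lemma chr_pt_add (z : Fin N → ℤ) (x y : G N) :
    chr z (x + y) = chr z x * chr z y := by
  simp only [chr_apply, ← Finset.prod_mul_distrib]
  exact Finset.prod_congr rfl fun n _ => fourier_pt_add (x n) (y n)

lemma norm_chr (z : Fin N → ℤ) (x : G N) : ‖chr z x‖ = 1 := by
  rw [chr_apply]
  rw [norm_prod]
  apply Finset.prod_eq_one
  intro n _
  simp [fourier_apply, Circle.norm_coe]
lemma chr_add_index (z w : Fin N → ℤ) : chr (z + w) = chr z * chr w := by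
  ext x
  simp only [chr_apply, ContinuousMap.mul_apply, ← Finset.prod_mul_distrib]
  exact Finset.prod_congr rfl fun n _ => by
    simpa using (fourier_add (m := z n) (n := w n) (x := x n))

lemma chr_neg_index (z : Fin N → ℤ) : chr (-z) = star (chr z) := by
  ext x
  simp only [chr_apply, ContinuousMap.star_apply, Pi.neg_apply, star_prod]
  exact Finset.prod_congr rfl fun n _ => fourier_neg

/-- The star subalgebra generated by the characters. -/
def chrAlg (N : ℕ) : StarSubalgebra ℂ C(G N, ℂ) where
  toSubalgebra := Algebra.adjoin ℂ (Set.range chr)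
  star_mem' := by
    show Algebra.adjoin ℂ (Set.range (chr (N := N))) ≤
      star (Algebra.adjoin ℂ (Set.range (chr (N := N))))
    refine Algebra.adjoin_le ?_
    rintro - ⟨z, rfl⟩
    exact Algebra.subset_adjoin ⟨-z, chr_neg_index z⟩

lemma chrAlg_coe :
    Subalgebra.toSubmodule (chrAlg N).toSubalgebra = span ℂ (Set.range (chr (N := N))) := by
  apply Algebra.adjoin_eq_span_of_subset
  refine Subset.trans ?_ Submodule.subset_span
  intro x hx
  refine Submonoid.closure_induction (fun _ => id) ⟨0, chr_zero⟩ ?_ hx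
  rintro - - - - ⟨z, rfl⟩ ⟨w, rfl⟩
  exact ⟨z + w, chr_add_index z w⟩

lemma chrAlg_separatesPoints : (chrAlg N).SeparatesPoints := by
  intro x y hxy
  obtain ⟨n, hn⟩ : ∃ n, x n ≠ y n := by
    by_contra h
    push_neg at h
    exact hxy (funext h)
  refine ⟨_, ⟨chr (Pi.single n 1), Algebra.subset_adjoin ⟨_, rfl⟩, rfl⟩, ?_⟩
  have key : ∀ w : G N, chr (Pi.single n (1:ℤ)) w = fourier 1 (w n) := by
    intro w
    rw [chr_apply]
    rw [Finset.prod_eq_single n]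
    · simp
    · intro m _ hm; simp [Pi.single_eq_of_ne hm, fourier_zero]
    · simp
  dsimp only
  rw [key, key, fourier_one, fourier_one]
  intro h
  rw [Circle.coe_inj] at h
  exact hn (AddCircle.injective_toCircle one_ne_zero h)

lemma span_chr_dense :
    (span ℂ (Set.range (chr (N := N)))).topologicalClosure = ⊤ := by
  rw [← chrAlg_coe]
  have := ContinuousMap.starSubalgebra_topologicalClosure_eq_top_of_separatesPoints
    (chrAlg N) chrAlg_separatesPoints
  exact congr_arg (Subalgebra.toSubmodule <| StarSubalgebra.toSubalgebra ·) this
/-! ### Integrals of characters -/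

instance : IsProbabilityMeasure (volume : Measure (AddCircle (1:ℝ))) :=
  ⟨by simp⟩

instance : IsProbabilityMeasure (volume : Measure (G N)) := by
  rw [show (volume : Measure (G N)) = Measure.pi (fun _ => volume) from rfl]
  infer_instance

lemma integral_fourier_eq_zero {m : ℤ} (hm : m ≠ 0) :
    ∫ a : AddCircle (1:ℝ), (fourier m a : ℂ) = 0 := by
  exact integral_eq_zero_of_add_right_eq_neg
    (fourier_add_half_inv_index hm one_pos)

lemma integral_chr_eq_zero {z : Fin N → ℤ} (hz : z ≠ 0) :
    ∫ x : G N, chr z x = 0 := by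
  have : ∫ x : G N, chr z x = ∏ n, ∫ a : AddCircle (1:ℝ), (fourier (z n) a : ℂ) :=
    MeasureTheory.integral_fintype_prod_eq_prod
      (fun n a => (fourier (z n) a : ℂ))
  rw [this]
  obtain ⟨n, hn⟩ : ∃ n, z n ≠ 0 := by
    by_contra h; push_neg at h; exact hz (funext h)
  exact Finset.prod_eq_zero (Finset.mem_univ n) (integral_fourier_eq_zero hn)
/-! ### Orbits and Weyl averages -/

/-- The orbit of `x` under translation by `ω`. -/
def orb (ω : Fin N → ℝ) (x : G N) (k : ℕ) : G N := fun n => x n + ((k:ℝ) * ω n : ℝ)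

/-- The image of `ω` in the torus. -/
def ωbar (ω : Fin N → ℝ) : G N := fun n => ((ω n : ℝ) : AddCircle (1:ℝ))

lemma orb_eq (ω : Fin N → ℝ) (x : G N) (k : ℕ) : orb ω x k = x + k • ωbar ω := by
  funext n
  show x n + (((k:ℝ) * ω n : ℝ) : AddCircle (1:ℝ)) = x n + k • ((ω n : ℝ) : AddCircle (1:ℝ))
  congr 1
  rw [show ((k:ℝ) * ω n : ℝ) = (k • ω n : ℝ) by simp [nsmul_eq_mul]]
  exact QuotientAddGroup.mk_nsmul _ _ _

lemma chr_zero_pt (z : Fin N → ℤ) : chr z (0 : G N) = 1 := by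
  rw [chr_apply]
  apply Finset.prod_eq_one
  intro n _
  show (AddCircle.toCircle _ : ℂ) = 1
  simp

lemma chr_nsmul (z : Fin N → ℤ) (v : G N) (k : ℕ) : chr z (k • v) = chr z v ^ k := by
  induction k with
  | zero => simpa using chr_zero_pt z
  | succ k ih => rw [succ_nsmul, chr_pt_add, ih, pow_succ]

lemma chr_orb (z : Fin N → ℤ) (ω : Fin N → ℝ) (x : G N) (k : ℕ) :
    chr z (orb ω x k) = chr z x * chr z (ωbar ω) ^ k := by
  rw [orb_eq, chr_pt_add, chr_nsmul]

lemma chr_ωbar_ne_one {ω : Fin N → ℝ}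
    (hω : ∀ z : Fin N → ℤ, (∃ m : ℤ, (∑ n, (z n : ℝ) * ω n) = (m : ℝ)) → z = 0)
    {z : Fin N → ℤ} (hz : z ≠ 0) : chr z (ωbar ω) ≠ 1 := by
  intro h
  apply hz
  apply hω
  have hc : chr z (ωbar ω) = Complex.exp (2 * π * Complex.I * (∑ n, (z n : ℝ) * ω n)) := by
    rw [chr_apply]
    have hfn : ∀ n ∈ Finset.univ, (fourier (z n) (ωbar ω n) : ℂ)
        = Complex.exp (2 * π * Complex.I * ((z n : ℝ) * ω n)) := by
      intro n _
      rw [show ωbar ω n = ((ω n : ℝ) : AddCircle (1:ℝ)) from rfl, fourier_coe_apply]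
      push_cast
      ring_nf
    rw [Finset.prod_congr rfl hfn, ← Complex.exp_sum]
    congr 1
    rw [← Finset.mul_sum]
    push_cast
    ring
  rw [hc] at h
  rw [Complex.exp_eq_one_iff] at h
  obtain ⟨m, hm⟩ := h
  refine ⟨m, ?_⟩
  have h2 : (2 * (π:ℂ) * Complex.I) ≠ 0 := by
    simp [Real.pi_ne_zero, Complex.I_ne_zero, Complex.ofReal_ne_zero]
  have : ((∑ n, (z n : ℝ) * ω n : ℝ) : ℂ) = (m : ℂ) := by
    apply mul_left_cancel₀ h2
    rw [hm]; ring
  exact_mod_cast this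

lemma tendsto_avg_chr {ω : Fin N → ℝ}
    (hω : ∀ z : Fin N → ℤ, (∃ m : ℤ, (∑ n, (z n : ℝ) * ω n) = (m : ℝ)) → z = 0)
    (z : Fin N → ℤ) (x : G N) :
    Tendsto (fun K : ℕ => (K:ℂ)⁻¹ • ∑ k ∈ Finset.range K, chr z (orb ω x k))
      atTop (𝓝 (∫ w : G N, chr z w)) := by
  by_cases hz : z = 0
  · subst hz
    have h1 : ∫ w : G N, chr 0 w = 1 := by
      have : ∀ w : G N, chr (0 : Fin N → ℤ) w = 1 := by
        intro w; rw [chr_zero]; rfl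
      simp only [this]
      simp
    rw [h1]
    have : ∀ K : ℕ, 1 ≤ K → ((K:ℂ)⁻¹ • ∑ k ∈ Finset.range K, chr (0 : Fin N → ℤ) (orb ω x k)) = 1 := by
      intro K hK
      simp only [chr_zero, ContinuousMap.one_apply, Finset.sum_const, Finset.card_range,
        nsmul_eq_mul, mul_one, smul_eq_mul]
      rw [inv_mul_cancel₀]
      exact_mod_cast Nat.one_le_iff_ne_zero.mp hK
    rw [tendsto_congr' (by filter_upwards [eventually_ge_atTop 1] using this)]
    exact tendsto_const_nhds
  · set lam := chr z (ωbar ω) with hlam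
    have hl1 : lam ≠ 1 := chr_ωbar_ne_one hω hz
    have hln : ‖lam‖ = 1 := norm_chr z (ωbar ω)
    rw [integral_chr_eq_zero hz]
    refine squeeze_zero_norm (a := fun K : ℕ => (K:ℝ)⁻¹ * (2 / ‖lam - 1‖)) ?_ ?_
    · intro K
      have hsum : ∑ k ∈ Finset.range K, chr z (orb ω x k)
          = chr z x * ((lam ^ K - 1) / (lam - 1)) := by
        rw [← geom_sum_eq hl1 K, Finset.mul_sum]
        exact Finset.sum_congr rfl fun k _ => chr_orb z ω x k
      rw [hsum, norm_smul, norm_mul, norm_chr, one_mul, norm_inv, Complex.norm_natCast]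
      show (K:ℝ)⁻¹ * ‖(lam ^ K - 1) / (lam - 1)‖ ≤ (K:ℝ)⁻¹ * (2 / ‖lam - 1‖)
      gcongr
      rw [norm_div]
      gcongr
      calc ‖lam ^ K - 1‖ ≤ ‖lam ^ K‖ + ‖(1:ℂ)‖ := norm_sub_le _ _
        _ = 2 := by rw [norm_pow, hln, one_pow, norm_one]; norm_num
    · simpa using ((tendsto_inv_atTop_nhds_zero_nat (𝕜 := ℝ)).mul_const (2 / ‖lam - 1‖))

lemma integrable_cm (p : C(G N, ℂ)) : Integrable (fun w => p w) volume :=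
  p.continuous.integrable_of_hasCompactSupport (HasCompactSupport.of_compactSpace _)

lemma integrable_cm_real (p : C(G N, ℝ)) : Integrable (fun w => p w) volume :=
  p.continuous.integrable_of_hasCompactSupport (HasCompactSupport.of_compactSpace _)

lemma tendsto_avg_span {ω : Fin N → ℝ}
    (hω : ∀ z : Fin N → ℤ, (∃ m : ℤ, (∑ n, (z n : ℝ) * ω n) = (m : ℝ)) → z = 0)
    {p : C(G N, ℂ)} (hp : p ∈ span ℂ (Set.range (chr (N := N)))) (x : G N) :
    Tendsto (fun K : ℕ => (K:ℂ)⁻¹ • ∑ k ∈ Finset.range K, p (orb ω x k))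
      atTop (𝓝 (∫ w : G N, p w)) := by
  induction hp using Submodule.span_induction with
  | mem p hp =>
    obtain ⟨z, rfl⟩ := hp
    exact tendsto_avg_chr hω z x
  | zero =>
    simp only [ContinuousMap.zero_apply, Finset.sum_const, smul_zero, integral_zero]
    exact tendsto_const_nhds
  | add p q hp hq ihp ihq =>
    have hI : (∫ w : G N, (p + q) w) = (∫ w : G N, p w) + ∫ w : G N, q w := by
      simp only [ContinuousMap.add_apply]
      exact integral_add (integrable_cm p) (integrable_cm q)
    rw [hI]
    simpa only [ContinuousMap.add_apply, Finset.sum_add_distrib, smul_add] using ihp.add ihq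
  | smul c p hp ih =>
    have hI : (∫ w : G N, (c • p) w) = c • ∫ w : G N, p w := by
      simp only [ContinuousMap.smul_apply]
      exact integral_smul c _
    rw [hI]
    have heq : ∀ K : ℕ, (K:ℂ)⁻¹ • ∑ k ∈ Finset.range K, (c • p) (orb ω x k)
        = c • ((K:ℂ)⁻¹ • ∑ k ∈ Finset.range K, p (orb ω x k)) := by
      intro K
      simp only [ContinuousMap.smul_apply, ← Finset.smul_sum]
      rw [smul_comm]
    rw [show (fun K : ℕ => (K:ℂ)⁻¹ • ∑ k ∈ Finset.range K, (c • p) (orb ω x k))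
        = fun K : ℕ => c • ((K:ℂ)⁻¹ • ∑ k ∈ Finset.range K, p (orb ω x k)) from funext heq]
    exact ih.const_smul c

end IrrKron

open IrrKron MeasureTheory Filter Topology in
/-- Minimality of irrational rotations: if `z · ω ∈ ℤ` for `z ∈ ℤᴺ` forces `z = 0`,
then every orbit of the translation by `ω` on the torus `𝕋ᴺ` is `δ`-dense. -/
theorem stmt_1 (N : ℕ) (ω : Fin N → ℝ)
    (hω : ∀ z : Fin N → ℤ, (∃ m : ℤ, (∑ n, (z n : ℝ) * ω n) = (m : ℝ)) → z = 0) :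
    ∀ x y : Fin N → AddCircle (1 : ℝ), ∀ δ > (0 : ℝ),
      ∃ k : ℕ, dist (fun n => x n + ((k : ℝ) * ω n : ℝ)) y < δ := by
  intro x y δ hδ
  by_contra hcon
  push_neg at hcon
  have hcon' : ∀ k : ℕ, δ ≤ dist (orb ω x k) y := fun k => hcon k
  -- a bump function at `y` vanishing on the orbit
  have hfcont : Continuous (fun w : G N => max 0 (1 - (2/δ) * dist w y)) :=
    continuous_const.max (continuous_const.sub
      (continuous_const.mul (continuous_id.dist continuous_const)))
  set f : C(G N, ℝ) := ⟨fun w => max 0 (1 - (2/δ) * dist w y), hfcont⟩ with hf_def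
  set fC : C(G N, ℂ) := ⟨fun w => ((f w : ℝ) : ℂ),
    Complex.continuous_ofReal.comp f.continuous⟩ with hfC_def
  have hf_nonneg : ∀ w, 0 ≤ f w := fun w => le_max_left _ _
  have hf_orbit : ∀ k : ℕ, f (orb ω x k) = 0 := by
    intro k
    have h1 : (2:ℝ) ≤ (2/δ) * dist (orb ω x k) y := by
      have := hcon' k
      calc (2:ℝ) = (2/δ) * δ := by field_simp
        _ ≤ (2/δ) * dist (orb ω x k) y :=
          mul_le_mul_of_nonneg_left this (by positivity)
    have : (1:ℝ) - (2/δ) * dist (orb ω x k) y ≤ 0 := by linarith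
    exact max_eq_left this
  have hf_ball : ∀ w, dist w y < δ/4 → (1/2 : ℝ) ≤ f w := by
    intro w hw
    have h1 : (2/δ) * dist w y ≤ 1/2 := by
      calc (2/δ) * dist w y ≤ (2/δ) * (δ/4) :=
          mul_le_mul_of_nonneg_left hw.le (by positivity)
        _ = 1/2 := by field_simp; ring
    have : (1/2 : ℝ) ≤ 1 - (2/δ) * dist w y := by linarith
    exact this.trans (le_max_right _ _)
  -- the ball has positive measure
  set B : Set (G N) := Metric.ball y (δ/4) with hB_def
  have hμB_ne : (volume B) ≠ 0 := by
    rw [hB_def, ball_pi _ (by positivity),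
      show (volume : Measure (G N)) = Measure.pi (fun _ => volume) from rfl,
      Measure.pi_pi]
    exact Finset.prod_ne_zero_iff.mpr fun n _ =>
      (Metric.measure_ball_pos _ _ (by positivity)).ne'
  set c : ℝ := (volume B).toReal with hc_def
  have hc : 0 < c := ENNReal.toReal_pos hμB_ne (measure_ne_top _ _)
  set ε : ℝ := c/8 with hε_def
  have hε : 0 < ε := by positivity
  -- approximate `fC` by a trigonometric polynomial `p`
  have hfc : fC ∈ closure ((span ℂ (Set.range (chr (N := N))) : Submodule ℂ C(G N, ℂ)) : Set C(G N, ℂ)) := by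
    have := span_chr_dense (N := N)
    have h2 : ((span ℂ (Set.range (chr (N := N)))).topologicalClosure : Set C(G N, ℂ))
        = closure ((span ℂ (Set.range (chr (N := N)))) : Set C(G N, ℂ)) := rfl
    rw [← h2, this]
    trivial
  obtain ⟨p, hp_mem, hp_close⟩ := Metric.mem_closure_iff.mp hfc ε hε
  have hpt : ∀ w : G N, ‖fC w - p w‖ ≤ ε := by
    intro w
    have := ContinuousMap.dist_apply_le_dist (f := fC) (g := p) w
    rw [dist_eq_norm] at this
    exact this.trans hp_close.le
  -- the orbit average of `p` is small
  have horb : ∀ k : ℕ, ‖p (orb ω x k)‖ ≤ ε := by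
    intro k
    have := hpt (orb ω x k)
    have hz : fC (orb ω x k) = 0 := by
      show ((f (orb ω x k) : ℝ) : ℂ) = 0
      rw [hf_orbit k]; simp
    rw [hz, zero_sub, norm_neg] at this
    exact this
  have havg := tendsto_avg_span hω hp_mem x
  have hIp : ‖∫ w : G N, p w‖ ≤ ε := by
    refine le_of_tendsto havg.norm (Eventually.of_forall fun K => ?_)
    rw [norm_smul, norm_inv, Complex.norm_natCast]
    rcases Nat.eq_zero_or_pos K with hK | hK
    · subst hK; simp [hε.le]
    calc ((K:ℝ))⁻¹ * ‖∑ k ∈ Finset.range K, p (orb ω x k)‖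
        ≤ ((K:ℝ))⁻¹ * (K * ε) := by
          gcongr
          calc ‖∑ k ∈ Finset.range K, p (orb ω x k)‖
              ≤ ∑ k ∈ Finset.range K, ‖p (orb ω x k)‖ := norm_sum_le _ _
            _ ≤ ∑ _k ∈ Finset.range K, ε := Finset.sum_le_sum fun k _ => horb k
            _ = K * ε := by rw [Finset.sum_const, Finset.card_range, nsmul_eq_mul]
      _ = ε := by field_simp
  -- the integrals of `p` and `fC` are close
  have hIdiff : ‖(∫ w : G N, fC w) - ∫ w : G N, p w‖ ≤ ε := by
    rw [← integral_sub (integrable_cm fC) (integrable_cm p)]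
    have := norm_integral_le_of_norm_le_const (μ := (volume : Measure (G N)))
      (f := fun w => fC w - p w) (C := ε) (Eventually.of_forall hpt)
    rw [probReal_univ, mul_one] at this
    exact this
  -- the integral of `f` is large
  have hIf : c/2 ≤ ∫ w : G N, f w := by
    have hint : Integrable (fun w => f w) (volume : Measure (G N)) := integrable_cm_real f
    have h1 : (1/2 : ℝ) * c ≤ ∫ w in B, f w := by
      have := setIntegral_ge_of_const_le_real measurableSet_ball (measure_ne_top _ _)
        (fun w hw => hf_ball w hw) hint.integrableOn
      exact this
    have h2 : (∫ w in B, f w) ≤ ∫ w : G N, f w :=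
      setIntegral_le_integral hint (Eventually.of_forall hf_nonneg)
    linarith
  have hIfC : (∫ w : G N, fC w) = ((∫ w : G N, f w : ℝ) : ℂ) :=
    integral_ofReal
  -- contradiction
  have hfinal : (∫ w : G N, f w) ≤ 2 * ε := by
    calc (∫ w : G N, f w) ≤ |∫ w : G N, f w| := le_abs_self _
      _ = ‖∫ w : G N, fC w‖ := by rw [hIfC, Complex.norm_real]; rfl
      _ ≤ ‖(∫ w : G N, fC w) - ∫ w : G N, p w‖ + ‖∫ w : G N, p w‖ := by
          simpa using norm_add_le ((∫ w : G N, fC w) - ∫ w : G N, p w) (∫ w : G N, p w)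
      _ ≤ ε + ε := add_le_add hIdiff hIp
      _ = 2 * ε := by ring
  rw [hε_def] at hfinal
  linarith
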